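/- Consider the complete bipartite graph with parts of size l and 2 (so r = 2), with the zero-field ferromagnetic Ising measure at inverse temperature θ > 0. Letting k, ℓ denote the two right-side vertices, P(X_k·X_ℓ = 1)/P(X_k·X_ℓ = −1) = cosh(2θ)^l. Consequently E[X_k·X_ℓ] = (cosh(2θ)^l − 1)/(cosh(2θ)^l + 1). -/

import Mathlib

/-- The spin value of a Boolean configuration entry. -/
def spin (b : Bool) : ℝ := if b then 1 else -1

/-- Energy of the zero-field Ising model on the complete bipartite graph with left part
`Fin l` and right part consisting of the two vertices `k, ℓ`. -/
noncomputable def biclique2Energy (l : ℕ) (θ : ℝ)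
    (p : (Fin l → Bool) × Bool × Bool) : ℝ :=
  θ * (∑ u, spin (p.1 u)) * (spin p.2.1 + spin p.2.2)

/-- Factorization of the partition-function sum over left spins. -/
lemma sum_exp_spin (l : ℕ) (c : ℝ) :
    ∑ σ : Fin l → Bool, Real.exp (c * ∑ u, spin (σ u))
      = (Real.exp c + Real.exp (-c)) ^ l := by
  have h : ∀ σ : Fin l → Bool,
      Real.exp (c * ∑ u, spin (σ u)) = ∏ u, Real.exp (c * spin (σ u)) := by
    intro σ; rw [Finset.mul_sum, Real.exp_sum]
  simp_rw [h]
  rw [← Fintype.sum_pow (fun b : Bool => Real.exp (c * spin b)) l]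
  simp [Fintype.sum_bool, spin]

/-- For the `l × 2` biclique: the odds `P(X_k X_ℓ = 1)/P(X_k X_ℓ = -1)` equal
`cosh(2θ)^l`, and consequently `E[X_k X_ℓ] = (cosh(2θ)^l - 1)/(cosh(2θ)^l + 1)`. -/
theorem biclique_r2_odds_and_corr (l : ℕ) (hl : 1 ≤ l) (θ : ℝ) (hθ : 0 < θ) :
    (∑ p : (Fin l → Bool) × Bool × Bool,
        if p.2.1 = p.2.2 then Real.exp (biclique2Energy l θ p) else 0) /
      (∑ p : (Fin l → Bool) × Bool × Bool,
        if p.2.1 ≠ p.2.2 then Real.exp (biclique2Energy l θ p) else 0)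
      = Real.cosh (2 * θ) ^ l
    ∧ (∑ p : (Fin l → Bool) × Bool × Bool,
          spin p.2.1 * spin p.2.2 * Real.exp (biclique2Energy l θ p)) /
        (∑ p : (Fin l → Bool) × Bool × Bool, Real.exp (biclique2Energy l θ p))
      = (Real.cosh (2 * θ) ^ l - 1) / (Real.cosh (2 * θ) ^ l + 1) := by
  have hsum : ∀ (g : (Fin l → Bool) × Bool × Bool → ℝ),
      ∑ p : (Fin l → Bool) × Bool × Bool, g p =
        ∑ σ : Fin l → Bool,
          (g (σ, true, true) + g (σ, true, false) + g (σ, false, true) +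
            g (σ, false, false)) := by
    intro g
    rw [Fintype.sum_prod_type]
    refine Finset.sum_congr rfl fun σ _ => ?_
    rw [Fintype.sum_prod_type]
    simp [Fintype.sum_bool]
    ring
  have hTT : ∀ σ : Fin l → Bool,
      biclique2Energy l θ (σ, true, true) = (2 * θ) * ∑ u, spin (σ u) := by
    intro σ; simp [biclique2Energy, spin]; ring
  have hFF : ∀ σ : Fin l → Bool,
      biclique2Energy l θ (σ, false, false) = (-(2 * θ)) * ∑ u, spin (σ u) := by
    intro σ; simp [biclique2Energy, spin]; ring
  have hTF : ∀ σ : Fin l → Bool, biclique2Energy l θ (σ, true, false) = 0 := by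
    intro σ; simp [biclique2Energy, spin]
  have hFT : ∀ σ : Fin l → Bool, biclique2Energy l θ (σ, false, true) = 0 := by
    intro σ; simp [biclique2Energy, spin]
  set c := Real.cosh (2 * θ) with hc
  have hA : (Real.exp (2 * θ) + Real.exp (-(2 * θ))) = 2 * c := by
    rw [hc, Real.cosh_eq]; ring
  -- the "equal spins" sum
  have hEq : ∑ σ : Fin l → Bool,
      (Real.exp (biclique2Energy l θ (σ, true, true)) +
        Real.exp (biclique2Energy l θ (σ, false, false))) = 2 * (2 * c) ^ l := by
    simp_rw [hTT, hFF]
    have hA' : Real.exp (-(2 * θ)) + Real.exp (2 * θ) = 2 * c := by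
      rw [add_comm]; exact hA
    rw [Finset.sum_add_distrib, sum_exp_spin, sum_exp_spin, neg_neg, hA, hA']
    ring
  have hNe : ∑ σ : Fin l → Bool,
      (Real.exp (biclique2Energy l θ (σ, true, false)) +
        Real.exp (biclique2Energy l θ (σ, false, true))) = 2 * 2 ^ l := by
    simp_rw [hTF, hFT, Real.exp_zero]
    simp [Finset.card_univ]
    ring
  have hcpos : 0 < c := Real.cosh_pos _
  have hc1 : 1 ≤ c := Real.one_le_cosh _
  have h2l : (0:ℝ) < 2 ^ l := by positivity
  -- numerator / denominator of first claim
  have hN : (∑ p : (Fin l → Bool) × Bool × Bool,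
      if p.2.1 = p.2.2 then Real.exp (biclique2Energy l θ p) else 0) = 2 * (2 * c) ^ l := by
    rw [hsum]
    simp only [if_pos rfl, if_neg (by decide : ¬ (true = false)),
      if_neg (by decide : ¬ (false = true))]
    simpa using hEq
  have hD : (∑ p : (Fin l → Bool) × Bool × Bool,
      if p.2.1 ≠ p.2.2 then Real.exp (biclique2Energy l θ p) else 0) = 2 * 2 ^ l := by
    rw [hsum]
    simp only [ne_eq, if_pos, if_neg]
    · simpa using hNe
  have hZ : (∑ p : (Fin l → Bool) × Bool × Bool, Real.exp (biclique2Energy l θ p))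
      = 2 * (2 * c) ^ l + 2 * 2 ^ l := by
    rw [hsum, ← hEq, ← hNe, ← Finset.sum_add_distrib]
    refine Finset.sum_congr rfl fun σ _ => ?_
    ring
  have hCorrNum : (∑ p : (Fin l → Bool) × Bool × Bool,
      spin p.2.1 * spin p.2.2 * Real.exp (biclique2Energy l θ p))
      = 2 * (2 * c) ^ l - 2 * 2 ^ l := by
    rw [hsum, ← hEq, ← hNe]
    rw [eq_sub_iff_add_eq, ← Finset.sum_add_distrib]
    refine Finset.sum_congr rfl fun σ _ => ?_
    simp [spin]
    ring
  constructor
  · rw [hN, hD, mul_pow]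
    field_simp
  · rw [hCorrNum, hZ, mul_pow]
    rw [div_eq_div_iff (by positivity) (by positivity)]
    ring
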